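/- If S = {v_1,…,v_n} ⊂ ℤ^n is an orthogonal subset with |V_α| ≥ 2 for all α, then p_1(S) = 0; that is, no standard basis vector e_j has exactly one of the v_i with nonzero j-th coordinate. -/
import Mathlib


open Finset

/-- The standard dot product on `ℤ^n`. -/
def dotZ {n : ℕ} (v w : Fin n → ℤ) : ℤ := ∑ i, v i * w i

/-- A family `v_1, …, v_n` of vectors in `ℤ^n` is orthogonal. -/
def OrthogonalSubset {n : ℕ} (v : Fin n → Fin n → ℤ) : Prop :=
  (∀ i, 1 ≤ dotZ (v i) (v i)) ∧ (∀ i j, i ≠ j → dotZ (v i) (v j) = 0)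

/-- Rational dot product. -/
def dq {n : ℕ} (a b : Fin n → ℚ) : ℚ := ∑ l, a l * b l

lemma dq_comm {n : ℕ} (a b : Fin n → ℚ) : dq a b = dq b a := by
  simp [dq, mul_comm]

lemma dq_sum_left {n : ℕ} (c : Fin n → ℚ) (u : Fin n → Fin n → ℚ) (z : Fin n → ℚ) :
    dq (∑ k, c k • u k) z = ∑ k, c k * dq (u k) z := by
  simp only [dq, Finset.sum_apply, Pi.smul_apply, smul_eq_mul, Finset.mul_sum,
    Finset.sum_mul]
  rw [Finset.sum_comm]
  exact Finset.sum_congr rfl fun k _ => Finset.sum_congr rfl fun l _ => by ring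

theorem stmt_13 {n : ℕ} (v : Fin n → Fin n → ℤ) (horth : OrthogonalSubset v)
    (hV : ∀ α, 2 ≤ (univ.filter fun j => v α j ≠ 0).card) :
    (univ.filter fun j => (univ.filter fun i => v i j ≠ 0).card = 1).card = 0 := by
  rw [Finset.card_eq_zero]
  by_contra hne
  obtain ⟨j, hj⟩ := Finset.nonempty_iff_ne_empty.2 hne
  rw [mem_filter] at hj
  obtain ⟨i, hi⟩ := Finset.card_eq_one.mp hj.2
  have hij : v i j ≠ 0 := by
    have h : i ∈ ({i} : Finset (Fin n)) := mem_singleton_self i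
    rw [← hi, mem_filter] at h
    exact h.2
  have huniq : ∀ k, v k j ≠ 0 → k = i := by
    intro k hk
    have h : k ∈ ({i} : Finset (Fin n)) := hi ▸ mem_filter.2 ⟨mem_univ _, hk⟩
    exact mem_singleton.mp h
  set u : Fin n → Fin n → ℚ := fun a b => (v a b : ℚ) with hu
  have hdq : ∀ a b, dq (u a) (u b) = (dotZ (v a) (v b) : ℚ) := by
    intro a b; simp [dq, dotZ, hu]
  have hself : ∀ a, dq (u a) (u a) ≠ 0 := by
    intro a
    rw [hdq]
    have := horth.1 a
    exact_mod_cast (by omega : dotZ (v a) (v a) ≠ 0)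
  have horthQ : ∀ a b, a ≠ b → dq (u a) (u b) = 0 := by
    intro a b hab
    rw [hdq, horth.2 a b hab]; norm_num
  -- linear independence
  have hli : LinearIndependent ℚ u := by
    rw [Fintype.linearIndependent_iff]
    intro g hg m
    have h1 : dq (∑ k, g k • u k) (u m) = 0 := by rw [hg]; simp [dq]
    rw [dq_sum_left] at h1
    rw [Finset.sum_eq_single m (fun k _ hk => by rw [horthQ k m hk, mul_zero])
      (fun h => absurd (mem_univ m) h)] at h1
    exact (mul_eq_zero.mp h1).resolve_right (hself m)
  have hnon : Nonempty (Fin n) := ⟨j⟩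
  have hcard : Fintype.card (Fin n) = Module.finrank ℚ (Fin n → ℚ) := by simp
  let B := basisOfLinearIndependentOfCardEqFinrank hli hcard
  have hB : ⇑B = u := coe_basisOfLinearIndependentOfCardEqFinrank hli hcard
  -- the witness vector
  set A : ℚ := (dotZ (v i) (v i) : ℚ) with hA
  set b : ℚ := (v i j : ℚ) with hb
  set w : Fin n → ℚ := fun l => A * (if l = j then 1 else 0) - b * u i l with hw
  have hwk : ∀ k, dq w (u k) = 0 := by
    intro k
    have hsplit : dq w (u k) = A * u k j - b * dq (u i) (u k) := by
      simp only [dq, hw, sub_mul, mul_assoc, Finset.sum_sub_distrib, ← Finset.mul_sum]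
      congr 2
      rw [Finset.sum_eq_single j (fun l _ hl => by simp [hl]) (fun h => absurd (mem_univ j) h)]
      simp
    rw [hsplit]
    by_cases hk : k = i
    · rw [hk, hdq, ← hA]
      have hbu : u i j = b := rfl
      rw [hbu]; ring
    · have h0 : v k j = 0 := by
        by_contra h0
        exact hk (huniq k h0)
      have : u k j = 0 := by simp [hu, h0]
      rw [this, horthQ i k (fun h => hk h.symm), mul_zero, mul_zero, sub_zero]
  -- w = 0
  have hww : dq w w = 0 := by
    have hrepr : (∑ k, B.repr w k • u k) = w := by
      conv_rhs => rw [← B.sum_repr w]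
      simp [hB]
    calc dq w w = dq (∑ k, B.repr w k • u k) w := by rw [hrepr]
      _ = ∑ k, B.repr w k * dq (u k) w := dq_sum_left _ _ _
      _ = 0 := by
          refine Finset.sum_eq_zero fun k _ => ?_
          rw [dq_comm, hwk k, mul_zero]
  have hwzero : ∀ l, w l = 0 := by
    intro l
    have h := (Finset.sum_eq_zero_iff_of_nonneg (fun l _ => mul_self_nonneg (w l))).mp hww l (mem_univ l)
    exact mul_self_eq_zero.mp h
  -- contradiction: v i has a nonzero coordinate l ≠ j
  obtain ⟨l, hl, hlj⟩ := Finset.exists_mem_ne (lt_of_lt_of_le one_lt_two (hV i)) j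
  rw [mem_filter] at hl
  have h := hwzero l
  rw [hw] at h
  simp only [if_neg hlj] at h
  have hb0 : b ≠ 0 := by
    rw [hb]; exact_mod_cast hij
  have hul : u i l ≠ 0 := by
    show (v i l : ℚ) ≠ 0
    exact_mod_cast hl.2
  rw [mul_zero, zero_sub, neg_eq_zero] at h
  exact (mul_ne_zero hb0 hul) h
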